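/- For any functions d, e : X × X → [0,∞] and all subsets Y,Z ⊆ X, one has (d∘e)_H(Y,Z) ≤ (d_H ∘ e_H)(Y,Z) ≤ 2·(d∘e)_H(Y,Z), where (d∘e)(x,y) = inf_z (d(x,z)+e(z,y)), (d_H ∘ e_H)(Y,Z) = inf_{W⊆X} (d_H(Y,W) + e_H(W,Z)), and d_H(Y,Z) = sup_{y∈Y} inf_{z∈Z} d(y,z). -/

import Mathlib

open ENNReal Filter Set

/-- `(d∘e)_H ≤ d_H ∘ e_H ≤ 2·(d∘e)_H`, where `∘` on the power set takes infima over
intermediate subsets `W ⊆ X` and `d_H(Y,Z) = ⨆ y ∈ Y, ⨅ z ∈ Z, d y z`. -/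
theorem hausdorff_comp {X : Type*} (d e : X → X → ℝ≥0∞) (Y Z : Set X) :
    (⨆ y ∈ Y, ⨅ z ∈ Z, ⨅ w : X, (d y w + e w z)) ≤
      (⨅ W : Set X, (⨆ y ∈ Y, ⨅ w ∈ W, d y w) + (⨆ w ∈ W, ⨅ z ∈ Z, e w z)) ∧
    (⨅ W : Set X, (⨆ y ∈ Y, ⨅ w ∈ W, d y w) + (⨆ w ∈ W, ⨅ z ∈ Z, e w z)) ≤
      2 * (⨆ y ∈ Y, ⨅ z ∈ Z, ⨅ w : X, (d y w + e w z)) := by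
  constructor
  · refine le_iInf fun W => iSup₂_le fun y hy => ?_
    set B := ⨆ w ∈ W, ⨅ z ∈ Z, e w z with hB
    have h1 : ∀ w ∈ W, (⨅ z ∈ Z, ⨅ w' : X, d y w' + e w' z) ≤ d y w + B := by
      intro w hw
      have step1 : (⨅ z ∈ Z, ⨅ w' : X, d y w' + e w' z) ≤ ⨅ z ∈ Z, (d y w + e w z) :=
        iInf₂_mono fun z _ => iInf_le _ w
      have step2 : (⨅ z ∈ Z, (d y w + e w z)) = d y w + ⨅ z ∈ Z, e w z := by
        simp [ENNReal.add_iInf]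
      have step3 : (⨅ z ∈ Z, e w z) ≤ B :=
        le_iSup₂ (f := fun w' (_ : w' ∈ W) => ⨅ z ∈ Z, e w' z) w hw
      calc (⨅ z ∈ Z, ⨅ w' : X, d y w' + e w' z)
          ≤ d y w + ⨅ z ∈ Z, e w z := step1.trans step2.le
        _ ≤ d y w + B := add_le_add_right step3 _
    have h2 : (⨅ z ∈ Z, ⨅ w' : X, d y w' + e w' z) ≤ (⨅ w ∈ W, d y w) + B := by
      rw [ENNReal.iInf_add]
      simp only [ENNReal.iInf_add]
      exact le_iInf₂ h1
    exact h2.trans (add_le_add_left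
      (le_iSup₂ (f := fun y' (_ : y' ∈ Y) => ⨅ w ∈ W, d y' w) y hy) _)
  · set s := ⨆ y ∈ Y, ⨅ z ∈ Z, ⨅ w : X, (d y w + e w z) with hs
    have key : ∀ t : ℝ≥0∞, s < t →
        (⨅ W : Set X, (⨆ y ∈ Y, ⨅ w ∈ W, d y w) + (⨆ w ∈ W, ⨅ z ∈ Z, e w z)) ≤ 2 * t := by
      intro t ht
      set W : Set X := {w | ∃ y ∈ Y, ∃ z ∈ Z, d y w + e w z < t} with hW
      have hd : (⨆ y ∈ Y, ⨅ w ∈ W, d y w) ≤ t := by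
        refine iSup₂_le fun y hy => ?_
        have hlt : (⨅ z ∈ Z, ⨅ w : X, d y w + e w z) < t :=
          lt_of_le_of_lt
            (le_iSup₂ (f := fun y' (_ : y' ∈ Y) => ⨅ z ∈ Z, ⨅ w : X, d y' w + e w z) y hy) ht
        simp only [iInf_lt_iff] at hlt
        obtain ⟨z, hz, w, hw⟩ := hlt
        have hwW : w ∈ W := ⟨y, hy, z, hz, hw⟩
        exact (iInf₂_le_of_le w hwW le_rfl).trans ((le_add_right le_rfl).trans hw.le)
      have he : (⨆ w ∈ W, ⨅ z ∈ Z, e w z) ≤ t := by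
        refine iSup₂_le fun w hw => ?_
        obtain ⟨y, hy, z, hz, hlt⟩ := hw
        exact (iInf₂_le_of_le z hz le_rfl).trans ((le_add_left le_rfl).trans hlt.le)
      calc (⨅ W' : Set X, (⨆ y ∈ Y, ⨅ w ∈ W', d y w) + (⨆ w ∈ W', ⨅ z ∈ Z, e w z))
          ≤ (⨆ y ∈ Y, ⨅ w ∈ W, d y w) + (⨆ w ∈ W, ⨅ z ∈ Z, e w z) := iInf_le _ W
        _ ≤ t + t := add_le_add hd he
        _ = 2 * t := (two_mul t).symm
    rcases eq_or_ne s ⊤ with h | h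
    · rw [h]
      simp
    refine ENNReal.le_of_forall_pos_le_add fun ε hε _ => ?_
    have hε2 : ((ε : ℝ≥0∞) / 2) ≠ 0 := by
      simp [ENNReal.div_eq_zero_iff, hε.ne']
    have ht : s < s + (ε : ℝ≥0∞) / 2 := ENNReal.lt_add_right h hε2
    calc (⨅ W : Set X, (⨆ y ∈ Y, ⨅ w ∈ W, d y w) + (⨆ w ∈ W, ⨅ z ∈ Z, e w z))
        ≤ 2 * (s + (ε : ℝ≥0∞) / 2) := key _ ht
      _ = 2 * s + ε := by
          rw [mul_add, ENNReal.mul_div_cancel' (by norm_num) (by norm_num)]
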